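/- The set V = {(a,b) ∈ S¹ × S¹ | b ≠ a} admits a continuous local section of the path evaluation map, given by 'move counterclockwise from a to b'. -/

import Mathlib

open Set

/-- The unit circle in `ℝ²`. -/
abbrev S1 : Set (ℝ × ℝ) := {p | p.1 ^ 2 + p.2 ^ 2 = 1}

/-- Rotation of the plane by the angle `θ`. -/
noncomputable def rot (θ : ℝ) (p : ℝ × ℝ) : ℝ × ℝ :=
  (Real.cos θ * p.1 - Real.sin θ * p.2, Real.sin θ * p.1 + Real.cos θ * p.2)

noncomputable def toC (p : ℝ × ℝ) : ℂ := ⟨p.1, p.2⟩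

lemma toC_eq (p : ℝ × ℝ) : toC p = (p.1 : ℂ) + p.2 * Complex.I := by
  apply Complex.ext <;> simp [toC]

lemma cont_toC : Continuous toC := by
  have : toC = fun p => (p.1 : ℂ) + p.2 * Complex.I := funext toC_eq
  rw [this]; fun_prop

lemma abs_toC (p : ℝ × ℝ) (h : p ∈ S1) : ‖toC p‖ = 1 := by
  have : Complex.normSq (toC p) = 1 := by simpa [Complex.normSq_apply, sq, toC] using h
  simp [Complex.norm_def, this]

lemma toC_ne_zero (p : ℝ × ℝ) (h : p ∈ S1) : toC p ≠ 0 := by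
  intro h0
  have := abs_toC p h
  rw [h0] at this; simp at this

lemma rot_eq_exp (θ : ℝ) (p : ℝ × ℝ) :
    rot θ p = ((Complex.exp (θ * Complex.I) * toC p).re,
      (Complex.exp (θ * Complex.I) * toC p).im) := by
  simp only [rot, toC, Complex.mul_re, Complex.mul_im, Complex.exp_ofReal_mul_I_re,
    Complex.exp_ofReal_mul_I_im]
  ring_nf

lemma rot_mem_S1 (θ : ℝ) (p : ℝ × ℝ) (h : p ∈ S1) : rot θ p ∈ S1 := by
  have h2 := Real.sin_sq_add_cos_sq θ
  simp only [S1, mem_setOf_eq, rot] at *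
  nlinarith [h, h2]

/-- `V = {(a,b) | b ≠ a}` admits a continuous local section of the path evaluation map,
given by moving counterclockwise from `a` to `b`: writing `b = a·e^{iθ}` with
`θ ∈ (0, 2π)`, the path is `t ↦ a·e^{itθ}`. -/
theorem counterclockwise_section :
    ∃ s : ↥{p : ↥S1 × ↥S1 | p.2 ≠ p.1} → C(unitInterval, ↥S1),
      Continuous s ∧
      (∀ p, s p 0 = (p : ↥S1 × ↥S1).1 ∧ s p 1 = (p : ↥S1 × ↥S1).2) ∧
      ∀ p : ↥{p : ↥S1 × ↥S1 | p.2 ≠ p.1}, ∃ θ ∈ Ioo (0:ℝ) (2 * Real.pi),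
        ((p : ↥S1 × ↥S1).2 : ℝ × ℝ) = rot θ ((p : ↥S1 × ↥S1).1 : ℝ × ℝ) ∧
        ∀ t : unitInterval, ((s p t : ℝ × ℝ)) = rot ((t : ℝ) * θ) ((p : ↥S1 × ↥S1).1 : ℝ × ℝ) := by
  classical
  set V := {p : ↥S1 × ↥S1 | p.2 ≠ p.1} with hV
  -- basic data
  let a : ↥V → ℝ × ℝ := fun p => ((p : ↥S1 × ↥S1).1 : ℝ × ℝ)
  let b : ↥V → ℝ × ℝ := fun p => ((p : ↥S1 × ↥S1).2 : ℝ × ℝ)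
  have haS1 : ∀ p, a p ∈ S1 := fun p => ((p : ↥S1 × ↥S1).1).2
  have hbS1 : ∀ p, b p ∈ S1 := fun p => ((p : ↥S1 × ↥S1).2).2
  let z : ↥V → ℂ := fun p => -(toC (b p) / toC (a p))
  have hA0 : ∀ p, toC (a p) ≠ 0 := fun p => toC_ne_zero _ (haS1 p)
  have habsz : ∀ p, ‖z p‖ = 1 := by
    intro p
    simp [z, map_div₀, abs_toC _ (haS1 p), abs_toC _ (hbS1 p)]
  have hzne : ∀ p, z p ≠ -1 := by
    intro p h
    have hBA : toC (b p) = toC (a p) := by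
      have h' : toC (b p) / toC (a p) = 1 := by
        have : -(toC (b p) / toC (a p)) = -1 := h
        exact neg_injective this
      exact (div_eq_one_iff_eq (hA0 p)).mp h'
    have : b p = a p := by
      have h1 : (b p).1 = (a p).1 := congrArg Complex.re hBA
      have h2 : (b p).2 = (a p).2 := congrArg Complex.im hBA
      exact Prod.ext h1 h2
    exact p.2 (Subtype.ext this)
  have hslit : ∀ p, z p ∈ Complex.slitPlane := by
    intro p
    rcases lt_or_ge 0 (z p).re with h | h
    · exact Or.inl h
    · refine Or.inr fun him => ?_
      apply hzne p
      have hre : (z p).re ^ 2 = 1 := by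
        have := habsz p
        have hn : Complex.normSq (z p) = 1 := by
          have := congrArg (· ^ 2) this
          simpa [Complex.sq_norm] using this
        simpa [Complex.normSq_apply, him, sq] using hn
      have : (z p).re = -1 := by nlinarith
      exact Complex.ext (by simpa using this) (by simpa using him)
  -- the angle
  let θf : ↥V → ℝ := fun p => Real.pi + (z p).arg
  have hθmem : ∀ p, θf p ∈ Ioo (0 : ℝ) (2 * Real.pi) := by
    intro p
    have h1 := Complex.neg_pi_lt_arg (z p)
    have h2 : (z p).arg < Real.pi := by
      rcases lt_or_eq_of_le (Complex.arg_le_pi (z p)) with h | h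
      · exact h
      · exfalso
        rw [Complex.arg_eq_pi_iff] at h
        exact (hslit p).resolve_left (not_lt.2 h.1.le) h.2
    simp only [θf, mem_Ioo]
    constructor <;> linarith
  -- key algebraic identity: exp(θ i) * A = B
  have hkey : ∀ p, Complex.exp (θf p * Complex.I) * toC (a p) = toC (b p) := by
    intro p
    have h1 : Complex.exp ((z p).arg * Complex.I) = z p := by
      have := Complex.norm_mul_exp_arg_mul_I (z p)
      rwa [habsz p, Complex.ofReal_one, one_mul] at this
    have : Complex.exp (θf p * Complex.I)
        = Complex.exp (Real.pi * Complex.I) * Complex.exp ((z p).arg * Complex.I) := by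
      rw [← Complex.exp_add]; push_cast [θf]; ring_nf
    rw [this, Complex.exp_pi_mul_I, h1]
    have : -1 * z p * toC (a p) = toC (b p) / toC (a p) * toC (a p) := by
      simp [z]
    rw [this, div_mul_cancel₀ _ (hA0 p)]
  -- continuity of θf
  have hzc : Continuous z := by
    apply Continuous.neg
    apply Continuous.div
    · exact cont_toC.comp (by fun_prop)
    · exact cont_toC.comp (by fun_prop)
    · exact hA0
  have hθc : Continuous θf := by
    apply continuous_const.add
    rw [continuous_iff_continuousAt]
    intro p
    exact (Complex.continuousAt_arg (hslit p)).comp hzc.continuousAt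
  -- the bundled map
  let G : C(↥V × unitInterval, ↥S1) :=
    ⟨fun q => ⟨rot ((q.2 : ℝ) * θf q.1) (a q.1), rot_mem_S1 _ _ (haS1 q.1)⟩, by
      apply Continuous.subtype_mk
      have : (fun q : ↥V × unitInterval => rot ((q.2 : ℝ) * θf q.1) (a q.1))
          = fun q => ((Complex.exp (((q.2 : ℝ) * θf q.1 : ℝ) * Complex.I) * toC (a q.1)).re,
            (Complex.exp (((q.2 : ℝ) * θf q.1 : ℝ) * Complex.I) * toC (a q.1)).im) := by
        funext q; exact rot_eq_exp _ _
      rw [this]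
      have hang : Continuous fun q : ↥V × unitInterval => ((q.2 : ℝ) * θf q.1 : ℝ) := by
        exact (continuous_subtype_val.comp continuous_snd).mul (hθc.comp continuous_fst)
      have hac : Continuous fun q : ↥V × unitInterval => toC (a q.1) := by
        apply cont_toC.comp
        fun_prop
      have hE : Continuous fun q : ↥V × unitInterval =>
          Complex.exp (((q.2 : ℝ) * θf q.1 : ℝ) * Complex.I) * toC (a q.1) := by
        apply Continuous.mul _ hac
        exact Complex.continuous_exp.comp ((Complex.continuous_ofReal.comp hang).mul
          continuous_const)
      exact (Complex.continuous_re.comp hE).prodMk (Complex.continuous_im.comp hE)⟩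
  refine ⟨fun p => G.curry p, G.curry.continuous, ?_, ?_⟩
  · intro p
    have hb : rot (θf p) (a p) = b p := by
      rw [rot_eq_exp, hkey p]
      exact Prod.ext rfl rfl
    constructor
    · apply Subtype.ext
      show rot ((0 : ℝ) * θf p) (a p) = a p
      simp [rot]
    · apply Subtype.ext
      show rot ((1 : ℝ) * θf p) (a p) = b p
      rw [one_mul, hb]
  · intro p
    refine ⟨θf p, hθmem p, ?_, fun t => rfl⟩
    rw [rot_eq_exp, hkey p]
    exact (Prod.ext rfl rfl).symm
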